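/- The rank of the ℝ-linear map Σ : ℍ → ℍ given by Σ(X) = PX + XQ (for quaternions P, Q) is even; that is, it equals 0, 2, or 4. -/

import Mathlib

open Quaternion LinearMap Module

lemma aux_ker_eq_span (P : Quaternion ℝ) (h : ¬(P.imI = 0 ∧ P.imJ = 0 ∧ P.imK = 0)) :
    LinearMap.ker (LinearMap.mulLeft ℝ P - LinearMap.mulRight ℝ P) = Submodule.span ℝ {1, P} := by
  apply le_antisymm
  · intro Z hZ
    simp only [LinearMap.mem_ker, LinearMap.sub_apply, LinearMap.mulLeft_apply,
      LinearMap.mulRight_apply, sub_eq_zero, Quaternion.ext_iff, Quaternion.re_mul,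
      Quaternion.imI_mul, Quaternion.imJ_mul, Quaternion.imK_mul] at hZ
    obtain ⟨h1, h2, h3, h4⟩ := hZ
    rw [Submodule.mem_span_pair]
    have hcase : P.imI ≠ 0 ∨ P.imJ ≠ 0 ∨ P.imK ≠ 0 := by tauto
    rcases hcase with hb | hb | hb
    · refine ⟨Z.re - (Z.imI / P.imI) * P.re, Z.imI / P.imI, ?_⟩
      simp only [Quaternion.ext_iff, Quaternion.re_add, Quaternion.imI_add, Quaternion.imJ_add,
        Quaternion.imK_add, Quaternion.re_smul, Quaternion.imI_smul, Quaternion.imJ_smul,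
        Quaternion.imK_smul, Quaternion.re_one, Quaternion.imI_one, Quaternion.imJ_one,
        Quaternion.imK_one, smul_eq_mul]
      refine ⟨by ring, ?_, ?_, ?_⟩ <;> field_simp <;> linarith [h2, h3, h4]
    · refine ⟨Z.re - (Z.imJ / P.imJ) * P.re, Z.imJ / P.imJ, ?_⟩
      simp only [Quaternion.ext_iff, Quaternion.re_add, Quaternion.imI_add, Quaternion.imJ_add,
        Quaternion.imK_add, Quaternion.re_smul, Quaternion.imI_smul, Quaternion.imJ_smul,
        Quaternion.imK_smul, Quaternion.re_one, Quaternion.imI_one, Quaternion.imJ_one,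
        Quaternion.imK_one, smul_eq_mul]
      refine ⟨by ring, ?_, ?_, ?_⟩ <;> field_simp <;> linarith [h2, h3, h4]
    · refine ⟨Z.re - (Z.imK / P.imK) * P.re, Z.imK / P.imK, ?_⟩
      simp only [Quaternion.ext_iff, Quaternion.re_add, Quaternion.imI_add, Quaternion.imJ_add,
        Quaternion.imK_add, Quaternion.re_smul, Quaternion.imI_smul, Quaternion.imJ_smul,
        Quaternion.imK_smul, Quaternion.re_one, Quaternion.imI_one, Quaternion.imJ_one,
        Quaternion.imK_one, smul_eq_mul]
      refine ⟨by ring, ?_, ?_, ?_⟩ <;> field_simp <;> linarith [h2, h3, h4]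
  · rw [Submodule.span_le]
    rintro x (rfl | rfl) <;>
      simp [LinearMap.mem_ker, sub_eq_zero]

lemma aux_ker_finrank (P : Quaternion ℝ) (h : ¬(P.imI = 0 ∧ P.imJ = 0 ∧ P.imK = 0)) :
    Module.finrank ℝ (LinearMap.ker (LinearMap.mulLeft ℝ P - LinearMap.mulRight ℝ P)) = 2 := by
  rw [aux_ker_eq_span P h]
  have hli : LinearIndependent ℝ ![(1 : Quaternion ℝ), P] := by
    rw [LinearIndependent.pair_iff]
    intro s t hst
    rw [Quaternion.ext_iff] at hst
    simp only [Quaternion.re_add, Quaternion.imI_add, Quaternion.imJ_add, Quaternion.imK_add,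
      Quaternion.re_smul, Quaternion.imI_smul, Quaternion.imJ_smul, Quaternion.imK_smul,
      Quaternion.re_one, Quaternion.imI_one, Quaternion.imJ_one, Quaternion.imK_one,
      smul_eq_mul, Quaternion.re_zero, Quaternion.imI_zero, Quaternion.imJ_zero,
      Quaternion.imK_zero, mul_zero, add_zero, mul_one] at hst
    obtain ⟨h1, h2, h3, h4⟩ := hst
    have ht : t = 0 := by
      by_contra ht
      exact h ⟨(mul_eq_zero.mp (by linarith : t * P.imI = 0)).resolve_left ht,
        (mul_eq_zero.mp (by linarith : t * P.imJ = 0)).resolve_left ht,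
        (mul_eq_zero.mp (by linarith : t * P.imK = 0)).resolve_left ht⟩
    constructor
    · rw [ht] at h1; linarith
    · exact ht
  have hr : ({1, P} : Set (Quaternion ℝ)) = Set.range ![1, P] := by
    ext x; simp [Fin.exists_fin_two, eq_comm]; tauto
  rw [hr, finrank_span_eq_card hli]
  simp

theorem stmt_5 (P Q : Quaternion ℝ) :
    Module.finrank ℝ
        (LinearMap.range (LinearMap.mulLeft ℝ P + LinearMap.mulRight ℝ Q)) = 0 ∨
    Module.finrank ℝ
        (LinearMap.range (LinearMap.mulLeft ℝ P + LinearMap.mulRight ℝ Q)) = 2 ∨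
    Module.finrank ℝ
        (LinearMap.range (LinearMap.mulLeft ℝ P + LinearMap.mulRight ℝ Q)) = 4 := by
  set S : Quaternion ℝ →ₗ[ℝ] Quaternion ℝ := LinearMap.mulLeft ℝ P + LinearMap.mulRight ℝ Q with hS
  have hrn : Module.finrank ℝ (LinearMap.range S) + Module.finrank ℝ (LinearMap.ker S)
      = Module.finrank ℝ (Quaternion ℝ) := LinearMap.finrank_range_add_finrank_ker S
  rw [Quaternion.finrank_eq_four] at hrn
  have hker : Module.finrank ℝ (LinearMap.ker S) = 0 ∨
      Module.finrank ℝ (LinearMap.ker S) = 2 ∨ Module.finrank ℝ (LinearMap.ker S) = 4 := by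
    by_cases hbot : LinearMap.ker S = ⊥
    · left; rw [hbot]; exact finrank_bot ℝ _
    · obtain ⟨X₀, hX₀mem, hne⟩ := Submodule.ne_bot_iff _ |>.mp hbot
      have hmem : P * X₀ + X₀ * Q = 0 := by
        simpa [hS, LinearMap.mem_ker] using hX₀mem
      have hQ : Q = -(X₀⁻¹ * P * X₀) := by
        have h1 : X₀ * Q = -(P * X₀) := eq_neg_of_add_eq_zero_right hmem
        have : X₀⁻¹ * (X₀ * Q) = X₀⁻¹ * (-(P * X₀)) := by rw [h1]
        rw [← mul_assoc, inv_mul_cancel₀ hne, one_mul] at this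
        rw [this, mul_neg, mul_assoc]
      set D : Quaternion ℝ →ₗ[ℝ] Quaternion ℝ :=
        LinearMap.mulLeft ℝ P - LinearMap.mulRight ℝ P with hD
      let e : Quaternion ℝ ≃ₗ[ℝ] Quaternion ℝ :=
        LinearEquiv.ofLinear (LinearMap.mulRight ℝ X₀) (LinearMap.mulRight ℝ X₀⁻¹)
          (LinearMap.ext fun x => by simp [mul_assoc, inv_mul_cancel₀ hne])
          (LinearMap.ext fun x => by simp [mul_assoc, mul_inv_cancel₀ hne])
      have hkereq : LinearMap.ker S = (LinearMap.ker D).map (e : Quaternion ℝ →ₗ[ℝ] Quaternion ℝ) := by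
        ext X
        rw [Submodule.mem_map_equiv]
        have hesymm : e.symm X = X * X₀⁻¹ := rfl
        rw [hesymm]
        simp only [hS, hD, LinearMap.mem_ker, LinearMap.add_apply, LinearMap.sub_apply,
          LinearMap.mulLeft_apply, LinearMap.mulRight_apply]
        rw [hQ, sub_eq_zero, mul_neg, add_neg_eq_zero]
        rw [← (mul_left_injective₀ hne).eq_iff (a := P * (X * X₀⁻¹)) (b := X * X₀⁻¹ * P)]
        simp only [mul_assoc, inv_mul_cancel₀ hne, mul_one]
      rw [hkereq, LinearEquiv.finrank_map_eq]
      by_cases hPre : P.imI = 0 ∧ P.imJ = 0 ∧ P.imK = 0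
      · right; right
        have hPc : P = ((P.re : ℝ) : Quaternion ℝ) := by
          rw [Quaternion.ext_iff]
          exact ⟨rfl, by simp [hPre.1], by simp [hPre.2.1], by simp [hPre.2.2]⟩
        have hD0 : D = 0 := LinearMap.ext fun X => by
          simp only [hD, LinearMap.sub_apply, LinearMap.mulLeft_apply, LinearMap.mulRight_apply,
            LinearMap.zero_apply, sub_eq_zero]
          rw [hPc]
          exact Quaternion.coe_commutes _ _
        rw [hD0, LinearMap.ker_zero, finrank_top, Quaternion.finrank_eq_four]
      · right; left; exact aux_ker_finrank P hPre
  omega
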